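/- Suppose a group G acts on a tree T by automorphisms, without inversions and without fixing any vertex, and suppose the action is transitive on the (unoriented) edges of T. Let e be an edge of T, let E denote the vertex set of one of the two components of T − e, and let Y = {k ∈ G : both endpoints of the edge ke lie in E}, with Y* = G − Y. Then for every g ∈ G: gY ⊆ Y if and only if gE ⊆ E, and gY* ⊆ Y* if and only if gE* ⊆ E*. -/

import Mathlib

/-!
Statement 9: in the edge-transitive tree setting, `gY ⊆ Y` iff `gE ⊆ E`, and `gY* ⊆ Y*` iff `gE* ⊆ E*`.
-/

open scoped Pointwise

theorem translate_subset_iff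
    {V G : Type*} [Group G] [MulAction G V] (T : SimpleGraph V) (hT : T.IsTree)
    -- `G` acts on the tree `T` by automorphisms:
    (hact : ∀ (g : G) (x y : V), T.Adj x y ↔ T.Adj (g • x) (g • y))
    -- the action is without inversions:
    (hni : ∀ (g : G) (x y : V), T.Adj x y → ¬(g • x = y ∧ g • y = x))
    -- no vertex is fixed by every element of `G`:
    (hnofix : ¬ ∃ x : V, ∀ g : G, g • x = x)
    -- `e` is the edge of `T` with endpoints `u` and `v`:
    (u v : V) (huv : T.Adj u v)
    -- the action is transitive on the (unoriented) edges of `T`: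
    (htrans : ∀ x y : V, T.Adj x y → ∃ g : G, s(g • u, g • v) = s(x, y))
    -- `E` is the vertex set of the component of `T − e` containing `v`:
    (E : Set V) (hE : E = {x : V | (T.deleteEdges {s(u, v)}).Reachable v x})
    -- `Y = {k ∈ G : both endpoints of ke lie in E}`, and `Y* = G − Y = Yᶜ`:
    (Y : Set G) (hY : Y = {k : G | k • u ∈ E ∧ k • v ∈ E})
    (g : G) :
    (g • Y ⊆ Y ↔ g • E ⊆ E) ∧ (g • Yᶜ ⊆ Yᶜ ↔ g • Eᶜ ⊆ Eᶜ) := by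
  set T' : SimpleGraph V := T.deleteEdges {s(u, v)} with hT'
  have hvE : v ∈ E := by rw [hE]; exact SimpleGraph.Reachable.refl v
  -- u is not in E, since the edge is a bridge
  have huE : u ∉ E := by
    have hbr : T.IsBridge s(u, v) :=
      SimpleGraph.isAcyclic_iff_forall_adj_isBridge.mp hT.IsAcyclic huv
    intro hu
    rw [hE] at hu
    exact hbr (hu.symm : (T.deleteEdges {s(u, v)}).Reachable u v)
  -- a vertex of E other than v has a T-neighbor in E
  have step : ∀ x ∈ E, x ≠ v → ∃ y ∈ E, T.Adj x y := by
    intro x hx hxv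
    rw [hE] at hx
    obtain ⟨p⟩ := (hx : T'.Reachable v x)
    obtain ⟨y, q⟩ : ∃ y, T'.Adj x y ∧ T'.Reachable y v := by
      cases hp : p.reverse with
      | nil => exact absurd rfl hxv
      | cons h q => exact ⟨_, h, ⟨q⟩⟩
    refine ⟨y, ?_, ((SimpleGraph.deleteEdges_adj).mp q.1).1⟩
    rw [hE]; exact q.2.symm
  -- dichotomy: either v has a T-neighbor in E, or E = {v}
  by_cases hw : ∃ w, T.Adj v w ∧ w ∈ E
  · -- main case: every element of E is k•u or k•v for some k ∈ Y
    obtain ⟨w, hadjvw, hwE⟩ := hw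
    have repE : ∀ x ∈ E, ∃ k ∈ Y, x = k • u ∨ x = k • v := by
      intro x hx
      obtain ⟨y, hyE, hxy⟩ : ∃ y ∈ E, T.Adj x y := by
        by_cases hxv : x = v
        · exact ⟨w, hwE, hxv ▸ hadjvw⟩
        · exact step x hx hxv
      obtain ⟨k, hk⟩ := htrans x y hxy
      rw [Sym2.eq_iff] at hk
      rcases hk with ⟨h1, h2⟩ | ⟨h1, h2⟩
      · exact ⟨k, by rw [hY]; exact ⟨h1 ▸ hx, h2 ▸ hyE⟩, Or.inl h1.symm⟩
      · exact ⟨k, by rw [hY]; exact ⟨h1 ▸ hyE, h2 ▸ hx⟩, Or.inr h2.symm⟩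
    have key : ∀ h : G, h • Y ⊆ Y ↔ h • E ⊆ E := by
      intro h
      constructor
      · intro hsub x hx
        obtain ⟨x₀, hx₀, rfl⟩ := hx
        obtain ⟨k, hkY, hk⟩ := repE x₀ hx₀
        have hk' : h * k ∈ Y := hsub (Set.smul_mem_smul_set hkY)
        rw [hY] at hk'
        rcases hk with rfl | rfl
        · show h • (k • u) ∈ E
          rw [← mul_smul]; exact hk'.1
        · show h • (k • v) ∈ E
          rw [← mul_smul]; exact hk'.2
      · intro hsub z hz
        obtain ⟨k, hkY, rfl⟩ := hz
        rw [hY] at hkY ⊢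
        constructor
        · show (h * k) • u ∈ E
          rw [mul_smul]; exact hsub (Set.smul_mem_smul_set hkY.1)
        · show (h * k) • v ∈ E
          rw [mul_smul]; exact hsub (Set.smul_mem_smul_set hkY.2)
    refine ⟨key g, ?_⟩
    have c1 : g • Yᶜ ⊆ Yᶜ ↔ g⁻¹ • Y ⊆ Y := by
      rw [Set.smul_set_compl, Set.compl_subset_compl, Set.subset_smul_set_iff]
    have c2 : g • Eᶜ ⊆ Eᶜ ↔ g⁻¹ • E ⊆ E := by
      rw [Set.smul_set_compl, Set.compl_subset_compl, Set.subset_smul_set_iff]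
    rw [c1, c2]
    exact key g⁻¹
  · -- degenerate case: E = {v}; derive a contradiction with `hnofix`
    exfalso
    push_neg at hw
    have hEv : ∀ x ∈ E, x = v := by
      intro x hx
      by_contra hxv
      obtain ⟨y, hyE, hxy⟩ := step x hx hxv
      obtain ⟨z, hzE, hvz⟩ : ∃ z ∈ E, T.Adj v z := by
        by_cases hx' : x = v
        · exact ⟨y, hyE, hx' ▸ hxy⟩
        · -- x ∈ E, x ≠ v: walk from v to x, first edge gives a neighbor of v in E
          rw [hE] at hx
          obtain ⟨p⟩ := (hx : T'.Reachable v x)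
          obtain ⟨y', hy'1⟩ : ∃ y', T'.Adj v y' := by
            cases p with
            | nil => exact absurd rfl (Ne.symm hxv)
            | cons h q => exact ⟨_, h⟩
          refine ⟨y', ?_, ((SimpleGraph.deleteEdges_adj).mp hy'1).1⟩
          rw [hE]; exact ⟨hy'1.toWalk⟩
      exact hw z hvz hzE
    -- v's unique T-neighbor is u
    have vleaf : ∀ z, T.Adj v z → z = u := by
      intro z hz
      by_contra hzu
      have : T'.Adj v z := by
        rw [SimpleGraph.deleteEdges_adj]
        refine ⟨hz, ?_⟩
        simp only [Set.mem_singleton_iff, Sym2.eq_iff]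
        rintro (⟨h1, h2⟩ | ⟨h1, h2⟩)
        · exact huv.ne (h1.symm) |>.elim
        · exact hzu h2
      have hzE : z ∈ E := by rw [hE]; exact ⟨this.toWalk⟩
      exact hz.ne (hEv z hzE).symm
    -- translated leaves
    have gleaf : ∀ (h : G) z, T.Adj (h • v) z → z = h • u := by
      intro h z hz
      have : T.Adj v (h⁻¹ • z) := by
        rw [hact h v (h⁻¹ • z), smul_inv_smul]
        exact hz
      have := vleaf _ this
      rw [← this, smul_inv_smul]
    -- every edge has a "leaf side"
    have edge_rep : ∀ a b, T.Adj a b →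
        ∃ h : G, (a = h • u ∧ b = h • v) ∨ (a = h • v ∧ b = h • u) := by
      intro a b hab
      obtain ⟨h, hh⟩ := htrans a b hab
      rw [Sym2.eq_iff] at hh
      rcases hh with ⟨h1, h2⟩ | ⟨h1, h2⟩
      · exact ⟨h, Or.inl ⟨h1.symm, h2.symm⟩⟩
      · exact ⟨h, Or.inr ⟨h2.symm, h1.symm⟩⟩
    have hinj : ∀ (h : G), Function.Injective (fun x : V => h • x) :=
      fun h => MulAction.injective h
    by_cases hu2 : ∃ w, T.Adj u w ∧ w ≠ v
    · -- u is not a leaf; every neighbor of u is a leaf whose unique neighbor is u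
      obtain ⟨w, huw, hwv⟩ := hu2
      have nbr_leaf : ∀ z, T.Adj u z → ∀ z', T.Adj z z' → z' = u := by
        intro z hz z' hz'
        obtain ⟨h, hh⟩ := edge_rep u z hz
        rcases hh with ⟨h1, h2⟩ | ⟨h1, h2⟩
        · -- z = h • v is the leaf
          have := gleaf h z' (h2 ▸ hz')
          rw [this, ← h1]
        · -- u = h • v would make u a leaf: contradiction
          exfalso
          have hv' := gleaf h v (h1 ▸ huv)
          have hw' := gleaf h w (h1 ▸ huw)
          exact hwv (hw'.trans hv'.symm)
      have claim : ∀ (x z : V) (p : T.Walk x z), z = u → x = u ∨ T.Adj u x := by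
        intro x z p
        induction p with
        | nil => exact fun h => Or.inl h
        | cons h q ih =>
          intro hz
          rcases ih hz with h1 | h1
          · exact Or.inr (h1 ▸ h.symm)
          · exact Or.inl (nbr_leaf _ h1 _ h.symm)
      have hfix : ∀ h : G, h • u = u := by
        intro h
        obtain ⟨p⟩ := hT.isConnected.preconnected (h • u) u
        rcases claim _ _ p rfl with h1 | h1
        · exact h1
        · exfalso
          have hv' : T.Adj (h • u) (h • v) := (hact h u v).mp huv
          have hw' : T.Adj (h • u) (h • w) := (hact h u w).mp huw
          have e1 := nbr_leaf _ h1 _ hv'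
          have e2 := nbr_leaf _ h1 _ hw'
          exact hwv (hinj h (e2.trans e1.symm))
      exact hnofix ⟨u, hfix⟩
    · -- u is also a leaf: the tree is a single edge
      push_neg at hu2
      have uleaf : ∀ z, T.Adj u z → z = v := fun z hz => hu2 z hz
      have claim : ∀ (x z : V) (p : T.Walk x z), z = u → x = u ∨ x = v := by
        intro x z p
        induction p with
        | nil => exact fun h => Or.inl h
        | cons h q ih =>
          intro hz
          rcases ih hz with h1 | h1
          · exact Or.inr (uleaf _ (h1 ▸ h.symm))
          · exact Or.inl (vleaf _ (h1 ▸ h.symm))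
      have hfix : ∀ h : G, h • u = u := by
        intro h
        obtain ⟨p⟩ := hT.isConnected.preconnected (h • u) u
        rcases claim _ _ p rfl with h1 | h1
        · exact h1
        · exfalso
          -- h • u = v; then h • v must be u, an inversion
          have hv' : h • v = u ∨ h • v = v := by
            obtain ⟨q⟩ := hT.isConnected.preconnected (h • v) u
            exact claim _ _ q rfl
          rcases hv' with h2 | h2
          · exact hni h u v huv ⟨h1, h2⟩
          · exact huv.ne (hinj h (h1.trans h2.symm) : u = v)
      exact hnofix ⟨u, hfix⟩
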